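/- Let u : [-1,0] → ℂ be twice continuously differentiable, v : [-1,0] → ℂ continuously differentiable, and w : [0,1] → ℂ twice continuously differentiable, and suppose u'(-1) = 0, w(1) = 0, v(0) = w(0) and u'(0) = w'(0). Then Re( ∫_{-1}^{0} v'(ξ)·conj(u'(ξ)) dξ + ∫_{-1}^{0} u''(ξ)·conj(v(ξ)) dξ + ∫_{0}^{1} w''(ξ)·conj(w(ξ)) dξ ) = −∫_{0}^{1} |w'(ξ)|² dξ. -/

import Mathlib

open intervalIntegral

/-- Dissipativity identity for the wave-heat generator: if `u : [-1,0] → ℂ` is twice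
continuously differentiable, `v : [-1,0] → ℂ` is continuously differentiable,
`w : [0,1] → ℂ` is twice continuously differentiable, and `u'(-1) = 0`, `w(1) = 0`,
`v(0) = w(0)`, `u'(0) = w'(0)`, then
`Re(∫_{-1}^0 v'·conj(u') + ∫_{-1}^0 u''·conj(v) + ∫_0^1 w''·conj(w)) = −∫_0^1 |w'|²`. -/
theorem wave_heat_dissipativity_identity (u v w : ℝ → ℂ)
    (hu : ContDiff ℝ 2 u) (hv : ContDiff ℝ 1 v) (hw : ContDiff ℝ 2 w)
    (hbc_u : deriv u (-1) = 0) (hbc_w : w 1 = 0)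
    (hcpl1 : v 0 = w 0) (hcpl2 : deriv u 0 = deriv w 0) :
    ((∫ ξ in (-1:ℝ)..0, deriv v ξ * (starRingEnd ℂ) (deriv u ξ)) +
        (∫ ξ in (-1:ℝ)..0, deriv (deriv u) ξ * (starRingEnd ℂ) (v ξ)) +
        (∫ ξ in (0:ℝ)..1, deriv (deriv w) ξ * (starRingEnd ℂ) (w ξ))).re =
      -∫ ξ in (0:ℝ)..1, ‖deriv w ξ‖ ^ 2 := by
  have hu2 : ContDiff ℝ (1 + 1 : ℕ) u := by exact_mod_cast hu
  have hu' : ContDiff ℝ 1 (deriv u) := (contDiff_succ_iff_deriv.mp hu2).2.2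
  have hw2 : ContDiff ℝ (1 + 1 : ℕ) w := by exact_mod_cast hw
  have hw' : ContDiff ℝ 1 (deriv w) := (contDiff_succ_iff_deriv.mp hw2).2.2
  -- continuity facts
  have cu' : Continuous (deriv u) := hu'.continuous
  have cu'' : Continuous (deriv (deriv u)) := hu'.continuous_deriv le_rfl
  have cv : Continuous v := hv.continuous
  have cv' : Continuous (deriv v) := hv.continuous_deriv le_rfl
  have cw : Continuous w := hw.continuous
  have cw' : Continuous (deriv w) := hw'.continuous
  have cw'' : Continuous (deriv (deriv w)) := hw'.continuous_deriv le_rfl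
  have c1 : Continuous fun ξ => deriv (deriv u) ξ * (starRingEnd ℂ) (v ξ) :=
    cu''.mul (Complex.continuous_conj.comp cv)
  have c2 : Continuous fun ξ => deriv u ξ * (starRingEnd ℂ) (deriv v ξ) :=
    cu'.mul (Complex.continuous_conj.comp cv')
  have c3 : Continuous fun ξ => deriv (deriv w) ξ * (starRingEnd ℂ) (w ξ) :=
    cw''.mul (Complex.continuous_conj.comp cw)
  have c4 : Continuous fun ξ => deriv w ξ * (starRingEnd ℂ) (deriv w ξ) :=
    cw'.mul (Complex.continuous_conj.comp cw')
  -- integration by parts on [-1,0]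
  have keyu : ∀ ξ ∈ Set.uIcc (-1:ℝ) 0,
      HasDerivAt (fun t => deriv u t * (starRingEnd ℂ) (v t))
        (deriv (deriv u) ξ * (starRingEnd ℂ) (v ξ) + deriv u ξ * (starRingEnd ℂ) (deriv v ξ)) ξ :=
    fun ξ _ => ((hu'.differentiable one_ne_zero ξ).hasDerivAt).mul
      ((hv.differentiable one_ne_zero ξ).hasDerivAt).star
  have hIu := intervalIntegral.integral_eq_sub_of_hasDerivAt keyu
    ((c1.add c2).intervalIntegrable (-1) 0)
  have keyw : ∀ ξ ∈ Set.uIcc (0:ℝ) 1,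
      HasDerivAt (fun t => deriv w t * (starRingEnd ℂ) (w t))
        (deriv (deriv w) ξ * (starRingEnd ℂ) (w ξ) + deriv w ξ * (starRingEnd ℂ) (deriv w ξ)) ξ :=
    fun ξ _ => ((hw'.differentiable one_ne_zero ξ).hasDerivAt).mul
      ((hw.differentiable (by norm_num) ξ).hasDerivAt).star
  have hIw := intervalIntegral.integral_eq_sub_of_hasDerivAt keyw
    (((c3.add c4)).intervalIntegrable 0 1)
  rw [intervalIntegral.integral_add (c1.intervalIntegrable _ _)
      (c2.intervalIntegrable _ _)] at hIu
  rw [intervalIntegral.integral_add (c3.intervalIntegrable _ _)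
      (c4.intervalIntegrable _ _)] at hIw
  simp only [hbc_u, hbc_w, zero_mul, map_zero, mul_zero, sub_zero, zero_sub] at hIu hIw
  have h2 : (∫ ξ in (-1:ℝ)..0, deriv (deriv u) ξ * (starRingEnd ℂ) (v ξ))
      = deriv u 0 * (starRingEnd ℂ) (v 0)
        - ∫ ξ in (-1:ℝ)..0, deriv u ξ * (starRingEnd ℂ) (deriv v ξ) := by
    linear_combination hIu
  have h3 : (∫ ξ in (0:ℝ)..1, deriv (deriv w) ξ * (starRingEnd ℂ) (w ξ))
      = - deriv w 0 * (starRingEnd ℂ) (w 0)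
        - ∫ ξ in (0:ℝ)..1, deriv w ξ * (starRingEnd ℂ) (deriv w ξ) := by
    linear_combination hIw
  -- conjugation relations
  have hconj : (∫ ξ in (-1:ℝ)..0, deriv u ξ * (starRingEnd ℂ) (deriv v ξ))
      = (starRingEnd ℂ) (∫ ξ in (-1:ℝ)..0, deriv v ξ * (starRingEnd ℂ) (deriv u ξ)) := by
    have : (fun ξ => deriv u ξ * (starRingEnd ℂ) (deriv v ξ))
        = fun ξ => (starRingEnd ℂ) (deriv v ξ * (starRingEnd ℂ) (deriv u ξ)) := by
      funext ξ; simp [mul_comm]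
    rw [this]
    simp [intervalIntegral, ← integral_conj]
  have hnorm : (∫ ξ in (0:ℝ)..1, deriv w ξ * (starRingEnd ℂ) (deriv w ξ))
      = ((∫ ξ in (0:ℝ)..1, ‖deriv w ξ‖ ^ 2 : ℝ) : ℂ) := by
    rw [← intervalIntegral.integral_ofReal]
    congr 1; funext ξ
    rw [Complex.mul_conj]
    norm_cast
    simp [Complex.normSq_eq_norm_sq]
  rw [h2, h3, hconj, hcpl1, hcpl2, hnorm]
  set z := ∫ ξ in (-1:ℝ)..0, deriv v ξ * (starRingEnd ℂ) (deriv u ξ)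
  set r := ∫ ξ in (0:ℝ)..1, ‖deriv w ξ‖ ^ 2
  have : (z + (deriv w 0 * (starRingEnd ℂ) (w 0) - (starRingEnd ℂ) z) +
      (-deriv w 0 * (starRingEnd ℂ) (w 0) - (r : ℂ))) = z - (starRingEnd ℂ) z - (r : ℂ) := by
    ring
  rw [this]
  simp [Complex.sub_re, Complex.conj_re]
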